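/- arXiv:2007.15611 — 6 statements merged into one kernel-verified Lean document; each statement's English description precedes it below -/
import Mathlib

section
/- Let E₁ ⊆ E₂ ⊆ ⋯ be a sequence of locally convex topological vector spaces with continuous linear inclusion maps E_n → E_{n+1}, and let E := ⋃_n E_n carry the locally convex direct limit topology. Let U_n ⊆ E_n be open convex subsets with U₁ ⊆ U₂ ⊆ ⋯, and set U := ⋃_n U_n, which is open in E. Let F be a locally convex space and f : U → F a function such that for each n, the restriction f|_{U_n} is Lipschitz continuous as a map U_n ⊆ E_n → F (i.e., for every continuous seminorm p on F there is a continuous seminorm q on E_n with p(f(x)−f(y)) ≤ q(x−y) for all x,y ∈ U_n). Then f is continuous on U with respect to the direct limit topology. -/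
open Set
open Topology Filter Pointwise

/-- Theorem C: Let `E₁ ⊆ E₂ ⊆ ⋯` be a direct sequence of locally convex spaces with
continuous linear inclusions (realized by injective continuous linear maps `ι n` into the
union `EL`, compatible with continuous linear bonding maps `E n → E (n+1)`), and let `EL`
carry the locally convex direct limit topology (expressed by the hypothesis `hfinest`:
every convex set all of whose preimages are open is open).  Let `U n ⊆ E n` be open
convex subsets with increasing images, and `U = ⋃ n, ι n '' U n`.  If `f : EL → F` is
such that each restriction `f ∘ ι n : U n → F` is Lipschitz continuous in the seminorm
sense, then `f` is continuous on `U`. -/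
theorem directLimit_lipschitz_continuous
    {E : ℕ → Type*} [∀ n, AddCommGroup (E n)] [∀ n, Module ℝ (E n)]
    [∀ n, TopologicalSpace (E n)] [∀ n, IsTopologicalAddGroup (E n)]
    [∀ n, ContinuousSMul ℝ (E n)] [∀ n, LocallyConvexSpace ℝ (E n)]
    {EL : Type*} [AddCommGroup EL] [Module ℝ EL] [TopologicalSpace EL]
    [IsTopologicalAddGroup EL] [ContinuousSMul ℝ EL]
    (ι : ∀ n, E n →ₗ[ℝ] EL)
    (hιc : ∀ n, Continuous (ι n)) (hιinj : ∀ n, Function.Injective (ι n))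
    (hstep : ∀ n, ∃ j : E n →ₗ[ℝ] E (n + 1), Continuous j ∧ ∀ x, ι (n + 1) (j x) = ι n x)
    (hunion : ∀ x : EL, ∃ n y, ι n y = x)
    (hfinest : ∀ V : Set EL, Convex ℝ V → (∀ n, IsOpen (ι n ⁻¹' V)) → IsOpen V)
    {F : Type*} [AddCommGroup F] [Module ℝ F] [TopologicalSpace F]
    [IsTopologicalAddGroup F] [ContinuousSMul ℝ F] [LocallyConvexSpace ℝ F]
    (Un : ∀ n, Set (E n)) (hUo : ∀ n, IsOpen (Un n)) (hUc : ∀ n, Convex ℝ (Un n))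
    (hUincr : ∀ n, ι n '' Un n ⊆ ι (n + 1) '' Un (n + 1))
    (f : EL → F)
    (hlip : ∀ (n : ℕ) (P : Seminorm ℝ F), Continuous P →
      ∃ Q : Seminorm ℝ (E n), Continuous Q ∧
        ∀ x ∈ Un n, ∀ y ∈ Un n, P (f (ι n x) - f (ι n y)) ≤ Q (x - y)) :
    ContinuousOn f (⋃ n, ι n '' Un n) := by
  classical
  choose j hjc hjι using hstep
  -- the bonding maps send `Un n` into `Un (n+1)`
  have hjU : ∀ n, ∀ x ∈ Un n, j n x ∈ Un (n + 1) := by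
    intro n x hx
    obtain ⟨y, hy, hxy⟩ := hUincr n ⟨x, hx, rfl⟩
    have : ι (n + 1) y = ι (n + 1) (j n x) := by rw [hxy, hjι n x]
    rwa [← hιinj (n + 1) this]
  -- preimages under earlier inclusions of images of open sets are open
  have hpull : ∀ (d k n : ℕ), k + d = n → ∀ S : Set (E n), IsOpen S →
      IsOpen (ι k ⁻¹' (ι n '' S)) := by
    intro d
    induction d with
    | zero =>
      intro k n h S hS
      obtain rfl : k = n := by omega
      rwa [Function.Injective.preimage_image (hιinj k) S]
    | succ d ih =>
      intro k n h S hS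
      have h' : (k + 1) + d = n := by omega
      have h1 := ih (k + 1) n h' S hS
      have heq : ι k ⁻¹' (ι n '' S) = j k ⁻¹' (ι (k + 1) ⁻¹' (ι n '' S)) := by
        ext x
        simp only [Set.mem_preimage, hjι k x]
      rw [heq]
      exact h1.preimage (hjc k)
  -- main proof of continuity
  intro a ha
  rw [mem_iUnion] at ha
  obtain ⟨m, x₀, hx₀, rfl⟩ : ∃ m x₀, x₀ ∈ Un m ∧ ι m x₀ = a := by
    obtain ⟨m, x₀, hx₀, h⟩ := ha; exact ⟨m, x₀, hx₀, h⟩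
  rw [ContinuousWithinAt, Filter.tendsto_def]
  intro W hW
  set a := ι m x₀ with ha_def
  -- translate `W` to a neighbourhood of `0` and pick an abs-convex open set inside it
  have hW0 : (fun y => f a + y) ⁻¹' W ∈ 𝓝 (0 : F) := by
    have ht : Filter.Tendsto (fun y : F => f a + y) (𝓝 0) (𝓝 (f a)) := by
      exact (continuous_const.add continuous_id).tendsto' (0 : F) (f a) (by simp)
    exact ht hW
  obtain ⟨S, ⟨hS0, hSo, hSbal, hSconv⟩, hSW⟩ :=
    (nhds_hasBasis_absConvex_open ℝ F).mem_iff.mp hW0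
  have hSabs : Absorbent ℝ S := absorbent_nhds_zero (hSo.mem_nhds hS0)
  set P : Seminorm ℝ F := gaugeSeminorm hSbal hSconv hSabs with hP_def
  have hPball : P.ball 0 1 = S := gaugeSeminorm_ball_one hSo
  have hPc : Continuous P :=
    Seminorm.continuous (r := 1) (by rw [hPball]; exact hSo.mem_nhds hS0)
  choose Q hQc hQ using fun n => hlip n P hPc
  set ε : ℕ → ℝ := fun n => (2⁻¹ : ℝ) ^ (n + 1) with hε_def
  have hεpos : ∀ n, 0 < ε n := fun n => by positivity
  -- the increasing chain of open convex sets
  obtain ⟨Wc, hWc0, hWcs⟩ : ∃ Wc : ∀ n : ℕ, Set (E (m + n)),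
      Wc 0 = (Q m).ball x₀ (ε 0) ∩ Un m ∧
      ∀ k, Wc (k + 1) =
        ((j (m + k) '' Wc k) + (Q (m + k + 1)).ball 0 (ε (k + 1))) ∩ Un (m + k + 1) :=
    ⟨fun n => Nat.rec ((Q m).ball x₀ (ε 0) ∩ Un m)
      (fun k Wk =>
        ((j (m + k) '' Wk) + (Q (m + k + 1)).ball 0 (ε (k + 1))) ∩ Un (m + k + 1)) n,
      rfl, fun k => rfl⟩
  have hballo : ∀ (n : ℕ) (c : E n) (r : ℝ), IsOpen ((Q n).ball c r) := by
    intro n c r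
    have : (Q n).ball c r = (fun x => Q n (x - c)) ⁻¹' Iio r := by
      ext x; simp [Seminorm.mem_ball]
    rw [this]
    exact (isOpen_Iio).preimage ((hQc n).comp (continuous_id.sub continuous_const))
  have hWU : ∀ n, Wc n ⊆ Un (m + n) := by
    intro n
    cases n with
    | zero => rw [hWc0]; exact inter_subset_right
    | succ k => rw [hWcs k]; exact inter_subset_right
  have hWopen : ∀ n, IsOpen (Wc n) := by
    intro n
    cases n with
    | zero => rw [hWc0]; exact (hballo m x₀ (ε 0)).inter (hUo m)
    | succ k =>
      rw [hWcs k]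
      exact (IsOpen.add_left (hballo (m + k + 1) 0 (ε (k + 1)))).inter (hUo (m + k + 1))
  have hWconv : ∀ n, Convex ℝ (Wc n) := by
    intro n
    induction n with
    | zero => rw [hWc0]; exact ((Q m).convex_ball x₀ (ε 0)).inter (hUc m)
    | succ k ih =>
      rw [hWcs k]
      exact ((ih.linear_image (j (m + k))).add
        ((Q (m + k + 1)).convex_ball 0 (ε (k + 1)))).inter (hUc (m + k + 1))
  have hWmono : ∀ k, ∀ x ∈ Wc k, j (m + k) x ∈ Wc (k + 1) := by
    intro k x hx
    rw [hWcs k]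
    refine ⟨?_, hjU (m + k) x (hWU k hx)⟩
    have h0 : (0 : E (m + k + 1)) ∈ (Q (m + k + 1)).ball 0 (ε (k + 1)) :=
      (Q (m + k + 1)).mem_ball_self (hεpos (k + 1))
    have := Set.add_mem_add (Set.mem_image_of_mem (j (m + k)) hx) h0
    rwa [add_zero] at this
  have himg : ∀ k, ι (m + k) '' Wc k ⊆ ι (m + (k + 1)) '' Wc (k + 1) := by
    rintro k _ ⟨x, hx, rfl⟩
    exact ⟨j (m + k) x, hWmono k x hx, hjι (m + k) x⟩
  have himgle : ∀ k l, k ≤ l → ι (m + k) '' Wc k ⊆ ι (m + l) '' Wc l := by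
    intro k l hkl
    induction l, hkl using Nat.le_induction with
    | base => exact subset_rfl
    | succ l hkl ih => exact ih.trans (himg l)
  set V : Set EL := ⋃ n, ι (m + n) '' Wc n with hV_def
  have hVconv : Convex ℝ V := by
    intro p hp q hq s t hs ht hst
    rw [hV_def, mem_iUnion] at hp hq ⊢
    obtain ⟨n₁, hp⟩ := hp
    obtain ⟨n₂, hq⟩ := hq
    refine ⟨max n₁ n₂, ?_⟩
    have hp' := himgle n₁ (max n₁ n₂) (le_max_left _ _) hp
    have hq' := himgle n₂ (max n₁ n₂) (le_max_right _ _) hq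
    exact ((hWconv (max n₁ n₂)).linear_image (ι (m + max n₁ n₂))) hp' hq' hs ht hst
  have hVopen : IsOpen V := by
    refine hfinest V hVconv ?_
    intro k
    have hVk : V = ⋃ n, ι (m + (n + k)) '' Wc (n + k) := by
      apply Subset.antisymm
      · refine iUnion_subset fun n => ?_
        exact (himgle n (n + k) (Nat.le_add_right n k)).trans
          (subset_iUnion (fun n => ι (m + (n + k)) '' Wc (n + k)) n)
      · exact iUnion_subset fun n =>
          subset_iUnion_of_subset (n + k) subset_rfl
    rw [hVk, preimage_iUnion]
    refine isOpen_iUnion fun n => ?_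
    exact hpull (m + n) k (m + (n + k)) (by omega) (Wc (n + k)) (hWopen (n + k))
  have haV : a ∈ V := by
    rw [hV_def, mem_iUnion]
    refine ⟨0, x₀, ?_, rfl⟩
    rw [hWc0]
    exact ⟨(Q m).mem_ball_self (hεpos 0), hx₀⟩
  -- the key estimate
  have hEst : ∀ n, ∀ x ∈ Wc n, P (f (ι (m + n) x) - f a) < 1 - ε n := by
    intro n
    induction n with
    | zero =>
      intro x hx
      rw [hWc0] at hx
      obtain ⟨hb, hu⟩ := hx
      rw [Seminorm.mem_ball] at hb
      have h1 := hQ m x hu x₀ hx₀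
      have h3 : ε 0 ≤ 1 - ε 0 := by norm_num [hε_def]
      exact lt_of_le_of_lt h1 (lt_of_lt_of_le hb h3)
    | succ n ih =>
      intro x hx
      rw [hWcs n] at hx
      obtain ⟨hadd, hu⟩ := hx
      rw [Set.mem_add] at hadd
      obtain ⟨c, hc, b, hb, rfl⟩ := hadd
      obtain ⟨y, hy, rfl⟩ := hc
      have hju : j (m + n) y ∈ Un (m + n + 1) := hjU (m + n) y (hWU n hy)
      have h1 : P (f (ι (m + n + 1) (j (m + n) y + b)) - f (ι (m + n + 1) (j (m + n) y)))
          ≤ Q (m + n + 1) ((j (m + n) y + b) - j (m + n) y) :=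
        hQ (m + n + 1) _ hu _ hju
      rw [add_sub_cancel_left] at h1
      have h2 : Q (m + n + 1) b < ε (n + 1) := by
        simpa [Seminorm.mem_ball] using hb
      have h3 : P (f (ι (m + n + 1) (j (m + n) y)) - f a) < 1 - ε n := by
        rw [hjι (m + n) y]
        exact ih y hy
      have htri : P (f (ι (m + n + 1) (j (m + n) y + b)) - f a) ≤
          P (f (ι (m + n + 1) (j (m + n) y + b)) - f (ι (m + n + 1) (j (m + n) y))) +
          P (f (ι (m + n + 1) (j (m + n) y)) - f a) := by
        have := map_add_le_add P
          (f (ι (m + n + 1) (j (m + n) y + b)) - f (ι (m + n + 1) (j (m + n) y)))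
          (f (ι (m + n + 1) (j (m + n) y)) - f a)
        rwa [sub_add_sub_cancel] at this
      have hε2 : ε (n + 1) + (1 - ε n) = 1 - ε (n + 1) := by
        simp only [hε_def]
        rw [pow_succ (2⁻¹ : ℝ) (n + 1)]
        ring
      calc P (f (ι (m + (n + 1)) (j (m + n) y + b)) - f a)
          ≤ Q (m + n + 1) b + P (f (ι (m + n + 1) (j (m + n) y)) - f a) :=
            htri.trans (add_le_add_left h1 _)
        _ < ε (n + 1) + (1 - ε n) := add_lt_add h2 h3
        _ = 1 - ε (n + 1) := hε2
  -- conclude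
  refine mem_nhdsWithin.mpr ⟨V, hVopen, haV, ?_⟩
  rintro z ⟨hzV, -⟩
  rw [hV_def, mem_iUnion] at hzV
  obtain ⟨n, x, hx, rfl⟩ := hzV
  have h1 : P (f (ι (m + n) x) - f a) < 1 :=
    lt_of_lt_of_le (hEst n x hx) (by linarith [hεpos n])
  have h2 : f (ι (m + n) x) - f a ∈ S := by
    rw [← hPball, Seminorm.mem_ball]
    simpa using h1
  have h3 := hSW h2
  simpa using h3
end

section
/- Let E₁ ⊆ E₂ ⊆ ⋯ be a direct sequence of locally convex spaces with continuous linear inclusions, E := ⋃_n E_n with the locally convex direct limit topology, and U_n ⊆ E_n open convex with U₁ ⊆ U₂ ⊆ ⋯ and U := ⋃_n U_n. If x ∈ U (say x ∈ U₁ after reindexing, with x = 0 after translation), p is a continuous seminorm on F, ε > 0, and q_n are continuous seminorms on E_n with p(f(z)−f(y)) ≤ q_n(z−y) for all y,z ∈ U_n, then the set V := ⋃_{n∈ℕ} Σ_{k=1}^n (B^{q_k}_{ε·2^{-k}}(0) ∩ 2^{-k}U_k) is a convex open 0-neighbourhood in E, and Σ_{k=1}^n 2^{-k}U_k ⊆ U_n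 for each n. -/
open Set Pointwise

/-- The construction in the proof of Theorem C: in the direct limit `EL = ⋃ n, E n` of a
direct sequence of locally convex spaces, given open convex `0`-neighbourhoods
`U n ⊆ E n` with increasing images, continuous seminorms `q n` on `E n` implementing the
Lipschitz estimates for `f` on `U n`, and `ε > 0`, the set
`V = ⋃ n, Σ_{k=1}^n (B^{q_k}_{ε 2^{-k}}(0) ∩ 2^{-k} U_k)` is a convex open
`0`-neighbourhood in `EL`, and `Σ_{k=1}^n 2^{-k} U_k ⊆ U n` for each `n`. -/
theorem directLimit_sum_neighbourhood
    {E : ℕ → Type*} [∀ n, AddCommGroup (E n)] [∀ n, Module ℝ (E n)]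
    [∀ n, TopologicalSpace (E n)] [∀ n, IsTopologicalAddGroup (E n)]
    [∀ n, ContinuousSMul ℝ (E n)] [∀ n, LocallyConvexSpace ℝ (E n)]
    {EL : Type*} [AddCommGroup EL] [Module ℝ EL] [TopologicalSpace EL]
    [IsTopologicalAddGroup EL] [ContinuousSMul ℝ EL]
    (ι : ∀ n, E n →ₗ[ℝ] EL)
    (hιc : ∀ n, Continuous (ι n)) (hιinj : ∀ n, Function.Injective (ι n))
    (hstep : ∀ n, ∃ j : E n →ₗ[ℝ] E (n + 1), Continuous j ∧ ∀ x, ι (n + 1) (j x) = ι n x)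
    (hunion : ∀ x : EL, ∃ n y, ι n y = x)
    (hfinest : ∀ W : Set EL, Convex ℝ W → (∀ n, IsOpen (ι n ⁻¹' W)) → IsOpen W)
    (Un : ∀ n, Set (E n)) (hUo : ∀ n, IsOpen (Un n)) (hUc : ∀ n, Convex ℝ (Un n))
    (hU0 : ∀ n, (0 : E n) ∈ Un n)
    (hUincr : ∀ n, ι n '' Un n ⊆ ι (n + 1) '' Un (n + 1))
    {F : Type*} [AddCommGroup F] [Module ℝ F] [TopologicalSpace F]
    [IsTopologicalAddGroup F] [ContinuousSMul ℝ F] [LocallyConvexSpace ℝ F]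
    (f : EL → F) (P : Seminorm ℝ F) (hP : Continuous P)
    (ε : ℝ) (hε : 0 < ε)
    (q : ∀ n, Seminorm ℝ (E n)) (hq : ∀ n, Continuous (q n))
    (hqf : ∀ n, ∀ x ∈ Un n, ∀ y ∈ Un n, P (f (ι n x) - f (ι n y)) ≤ q n (x - y))
    (V : Set EL)
    (hV : V = ⋃ n, ∑ k ∈ Finset.Icc 1 n,
        ι k '' ((q k).ball 0 (ε / 2 ^ k) ∩ ((2 : ℝ) ^ k)⁻¹ • Un k)) :
    (0 : EL) ∈ V ∧ Convex ℝ V ∧ IsOpen V ∧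
      ∀ n, (∑ k ∈ Finset.Icc 1 n, ι k '' (((2 : ℝ) ^ k)⁻¹ • Un k)) ⊆ ι n '' Un n := by
  classical
  set S : ℕ → Set EL := fun n => ∑ k ∈ Finset.Icc 1 n,
      ι k '' ((q k).ball 0 (ε / 2 ^ k) ∩ ((2 : ℝ) ^ k)⁻¹ • Un k) with hSdef
  have hVS : V = ⋃ n, S n := hV
  -- the building blocks
  set W : ∀ k, Set (E k) := fun k => (q k).ball 0 (ε / 2 ^ k) ∩ ((2 : ℝ) ^ k)⁻¹ • Un k with hWdef
  have hSW : ∀ n, S n = ∑ k ∈ Finset.Icc 1 n, ι k '' W k := fun n => rfl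
  have hW0 : ∀ k, (0 : EL) ∈ ι k '' W k := by
    intro k
    refine ⟨0, ⟨?_, ⟨0, hU0 k, smul_zero _⟩⟩, map_zero _⟩
    rw [Seminorm.mem_ball_zero, map_zero]
    positivity
  have hWo : ∀ k, IsOpen (W k) := by
    intro k
    refine IsOpen.inter ?_ ((hUo k).smul₀ (by positivity))
    rw [Seminorm.ball_zero_eq]
    exact isOpen_lt (hq k) continuous_const
  have hWc : ∀ k, Convex ℝ (W k) :=
    fun k => ((q k).convex_ball 0 _).inter ((hUc k).smul _)
  have hSsucc : ∀ n, S (n + 1) = S n + ι (n + 1) '' W (n + 1) := by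
    intro n
    rw [hSW, hSW, Finset.sum_Icc_succ_top (Nat.succ_le_succ n.zero_le)]
  have hS0 : ∀ n, (0 : EL) ∈ S n := by
    intro n
    induction n with
    | zero => simp [hSW, Finset.Icc_eq_empty (by omega : ¬ (1:ℕ) ≤ 0)]
    | succ n ih =>
      rw [hSsucc]
      simpa using Set.add_mem_add ih (hW0 (n + 1))
  have hSmono : Monotone S := by
    refine monotone_nat_of_le_succ fun n => ?_
    rw [hSsucc]
    exact Set.subset_add_left _ (hW0 (n + 1))
  have hSc : ∀ n, Convex ℝ (S n) := by
    intro n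
    induction n with
    | zero =>
      have : S 0 = {0} := by
        rw [hSW, Finset.Icc_eq_empty (by omega : ¬ (1:ℕ) ≤ 0), Finset.sum_empty,
          ← Set.singleton_zero]
      rw [this]; exact convex_singleton 0
    | succ n ih =>
      rw [hSsucc]
      exact ih.add ((hWc (n + 1)).linear_image (ι (n + 1)))
  have hVc : Convex ℝ V := by
    rw [hVS]
    exact hSmono.directed_le.convex_iUnion hSc
  -- transfer maps
  have hJ : ∀ m n, m ≤ n → ∃ J : E m →ₗ[ℝ] E n, Continuous J ∧ ∀ x, ι n (J x) = ι m x := by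
    intro m n hmn
    induction hmn with
    | refl => exact ⟨LinearMap.id, continuous_id, fun x => rfl⟩
    | @step n h ih =>
      obtain ⟨J, hJc, hJι⟩ := ih
      obtain ⟨j, hjc, hjι⟩ := hstep n
      exact ⟨j.comp J, hjc.comp hJc, fun x => by
        simp only [LinearMap.comp_apply, hjι, hJι]⟩
  -- preimage of S (n+1) under ι (n+1) is open
  have hpre : ∀ n, IsOpen ((ι (n + 1)) ⁻¹' S (n + 1)) := by
    intro n
    have key : (ι (n + 1)) ⁻¹' S (n + 1) = (ι (n + 1)) ⁻¹' S n + W (n + 1) := by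
      rw [hSsucc]
      ext x
      constructor
      · intro hx
        rw [Set.mem_preimage, Set.mem_add] at hx
        obtain ⟨a, ha, b, ⟨w, hw, rfl⟩, hab⟩ := hx
        refine Set.mem_add.mpr ⟨x - w, ?_, w, hw, by abel⟩
        rw [Set.mem_preimage, map_sub]
        have hxe : ι (n + 1) x = a + ι (n + 1) w := hab.symm
        rw [hxe, add_sub_cancel_right]
        exact ha
      · intro hx
        obtain ⟨y, hy, w, hw, rfl⟩ := Set.mem_add.mp hx
        rw [Set.mem_preimage, map_add]
        exact Set.add_mem_add hy ⟨w, hw, rfl⟩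
    rw [key]
    exact (hWo (n + 1)).add_left
  have hVopen : IsOpen V := by
    refine hfinest V hVc ?_
    intro m
    have hcof : (ι m) ⁻¹' V = ⋃ n, (ι m) ⁻¹' S (m + n + 1) := by
      rw [hVS, Set.preimage_iUnion]
      apply Set.Subset.antisymm
      · refine Set.iUnion_subset fun n => ?_
        exact (Set.preimage_mono (hSmono (by omega : n ≤ m + n + 1))).trans
          (Set.subset_iUnion (fun n => (ι m) ⁻¹' S (m + n + 1)) n)
      · exact Set.iUnion_subset fun n =>
          Set.subset_iUnion (fun n => (ι m) ⁻¹' S n) (m + n + 1)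
    rw [hcof]
    refine isOpen_iUnion fun n => ?_
    obtain ⟨J, hJc, hJι⟩ := hJ m (m + n + 1) (by omega)
    have : (ι m) ⁻¹' S (m + n + 1) = J ⁻¹' ((ι (m + n + 1)) ⁻¹' S (m + n + 1)) := by
      ext x
      simp only [Set.mem_preimage, hJι]
    rw [this]
    exact (hpre (m + n)).preimage hJc
  -- the last statement
  have hinv_le_one : ∀ n : ℕ, ((2 : ℝ) ^ n)⁻¹ ≤ 1 := by
    intro n
    rw [inv_le_one₀ (by positivity)]
    exact one_le_pow₀ (by norm_num)
  have hsub : ∀ n (c : ℝ), 0 ≤ c → c ≤ 1 → c • Un n ⊆ Un n := by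
    rintro n c h0 h1 x ⟨u, hu, rfl⟩
    have := hUc n hu (hU0 n) h0 (by linarith : (0:ℝ) ≤ 1 - c) (by ring)
    simpa using this
  have key : ∀ n, (∑ k ∈ Finset.Icc 1 n, ι k '' (((2 : ℝ) ^ k)⁻¹ • Un k)) ⊆
      ι n '' ((1 - ((2 : ℝ) ^ n)⁻¹) • Un n) := by
    intro n
    induction n with
    | zero =>
      intro x hx
      rw [Finset.Icc_eq_empty (by omega : ¬ (1:ℕ) ≤ 0), Finset.sum_empty,
        Set.mem_zero] at hx
      subst hx
      exact ⟨0, ⟨0, hU0 0, by simp⟩, map_zero _⟩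
    | succ n ih =>
      rw [Finset.sum_Icc_succ_top (Nat.succ_le_succ n.zero_le)]
      intro x hx
      obtain ⟨a, ha, b, ⟨y, ⟨w, hw, rfl⟩, rfl⟩, rfl⟩ := Set.mem_add.mp hx
      obtain ⟨z, ⟨u, hu, rfl⟩, hz⟩ := ih ha
      -- transfer u into Un (n+1)
      obtain ⟨v, hv, hvu⟩ := hUincr n ⟨u, hu, rfl⟩
      have hcn : (0:ℝ) ≤ 1 - ((2 : ℝ) ^ n)⁻¹ := by linarith [hinv_le_one n]
      have hd : (0:ℝ) ≤ ((2 : ℝ) ^ (n + 1))⁻¹ := by positivity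
      have hcsum : (1 - ((2 : ℝ) ^ n)⁻¹) + ((2 : ℝ) ^ (n + 1))⁻¹
          = 1 - ((2 : ℝ) ^ (n + 1))⁻¹ := by
        have h2 : (2 : ℝ) ^ n ≠ 0 := by positivity
        rw [pow_succ]
        field_simp
        ring
      refine ⟨(1 - ((2 : ℝ) ^ n)⁻¹) • v + ((2 : ℝ) ^ (n + 1))⁻¹ • w, ?_, ?_⟩
      · rw [← hcsum, Convex.add_smul (hUc (n + 1)) hcn hd]
        exact Set.add_mem_add (Set.smul_mem_smul_set hv) (Set.smul_mem_smul_set hw)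
      · rw [map_add, map_smul, map_smul, hvu, ← hz, map_smul]
  refine ⟨?_, hVc, hVopen, ?_⟩
  · rw [hVS]
    exact Set.mem_iUnion.mpr ⟨0, hS0 0⟩
  · intro n
    refine (key n).trans (Set.image_mono ?_)
    exact hsub n _ (by linarith [hinv_le_one n]) (by
      have : (0:ℝ) ≤ ((2 : ℝ) ^ n)⁻¹ := by positivity
      linarith)
end

section
/- Let E be a complex locally convex space, U ⊆ E an open absolutely convex 0-neighbourhood, F a complex locally convex space, and f : U → F a complex analytic function with bounded image, i.e., M_p := sup p(f(U)) < ∞ for each continuous seminorm p on F. Let q be the Minkowski functional of (1/3)U. Then for all v, w ∈ (1/3)U and every continuous seminorm p on F, p(f(w) − f(v)) ≤ M_p · q(w − v); in particular the restriction of f to (1/3)U is Lipschitz continuous. -/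
open Set Pointwise

/-- A map between complex topological vector spaces is complex analytic on an open set if
it is continuous there and locally given by a pointwise convergent series of continuous
homogeneous polynomials (values of continuous multilinear maps on the diagonal). -/
def IsCAnalyticOn {E F : Type*} [AddCommGroup E] [Module ℂ E] [TopologicalSpace E]
    [AddCommGroup F] [Module ℂ F] [TopologicalSpace F] (f : E → F) (U : Set E) : Prop :=
  ContinuousOn f U ∧ ∀ x ∈ U,
    ∃ (p : (k : ℕ) → ContinuousMultilinearMap ℂ (fun _ : Fin k => E) F) (V : Set E),
      IsOpen V ∧ x ∈ V ∧ V ⊆ U ∧ ∀ y ∈ V, HasSum (fun k => p k fun _ => y - x) (f y)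

theorem seminorm_hahn_banach {F : Type*} [AddCommGroup F] [Module ℂ F] [Module ℝ F]
    [IsScalarTower ℝ ℂ F] (p : Seminorm ℂ F) (y : F) :
    ∃ ℓ : F →ₗ[ℂ] ℂ, (∀ x, ‖ℓ x‖ ≤ p x) ∧ p y ≤ ‖ℓ y‖ := by
  have hpreal : ∀ (c : ℝ) (x : F), p (c • x) = |c| * p x := by
    intro c x
    rw [← algebraMap_smul ℂ c x, map_smul_eq_mul]
    simp [Complex.norm_real]
  rcases eq_or_ne y 0 with rfl | hy
  · refine ⟨0, fun x => ?_, by simp⟩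
    simp only [LinearMap.zero_apply, norm_zero]
    exact apply_nonneg p x
  obtain ⟨g, hg_eq, hg_le⟩ :=
    exists_extension_of_le_sublinear (LinearPMap.mkSpanSingleton y (p y) hy) p
      (fun c hc x => by rw [hpreal, abs_of_pos hc])
      (fun x y => map_add_le_add p x y)
      (by
        rintro ⟨x, hx⟩
        obtain ⟨c, rfl⟩ := Submodule.mem_span_singleton.1 hx
        rw [LinearPMap.mkSpanSingleton'_apply]
        rcases le_or_gt 0 c with hc | hc
        · rw [smul_eq_mul, hpreal, abs_of_nonneg hc, RingHom.id_apply]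
        · refine le_trans ?_ (apply_nonneg p _)
          simpa using mul_nonpos_of_nonpos_of_nonneg hc.le (apply_nonneg p y))
  have hgy : g y = p y := by
    have := hg_eq ⟨y, Submodule.mem_span_singleton_self y⟩
    rwa [LinearPMap.mkSpanSingleton_apply] at this
  refine ⟨g.extendTo𝕜', fun x => ?_, ?_⟩
  · by_cases hx : g.extendTo𝕜' x = (0 : ℂ)
    · rw [hx, norm_zero]; exact apply_nonneg p x
    · have hsq := g.norm_extendTo𝕜'_apply_sq (𝕜 := ℂ) x
      have h1 : (‖(g.extendTo𝕜' x : ℂ)‖ : ℝ) ^ 2 ≤ ‖(g.extendTo𝕜' x : ℂ)‖ * p x := by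
        rw [show ‖(g.extendTo𝕜' x : ℂ)‖ ^ 2 = g ((starRingEnd ℂ) (g.extendTo𝕜' x) • x) from hsq]
        calc g ((starRingEnd ℂ) (g.extendTo𝕜' x) • x)
            ≤ p ((starRingEnd ℂ) (g.extendTo𝕜' x) • x) := hg_le _
          _ = ‖(starRingEnd ℂ) (g.extendTo𝕜' x)‖ * p x := map_smul_eq_mul p _ _
          _ = ‖(g.extendTo𝕜' x : ℂ)‖ * p x := by rw [RCLike.norm_conj]
      have hpos : 0 < ‖(g.extendTo𝕜' x : ℂ)‖ := norm_pos_iff.2 hx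
      nlinarith [h1]
  · have : Complex.re (g.extendTo𝕜' y) = g y := g.extendTo𝕜'_apply_re (𝕜 := ℂ) y
    calc (p y : ℝ) = Complex.re (g.extendTo𝕜' y) := by rw [this, hgy]
      _ ≤ ‖(g.extendTo𝕜' y : ℂ)‖ := Complex.re_le_norm _

/-- Cauchy-estimate step in the proof of Theorem D: if `U` is an open absolutely convex
`0`-neighbourhood in a complex locally convex space, `f : U → F` is complex analytic with
`p ∘ f ≤ M` on `U` for a continuous seminorm `p` on `F`, and `q` is the Minkowski
functional (gauge) of `(1/3)U`, then `p (f w − f v) ≤ M · q (w − v)` for all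
`v, w ∈ (1/3)U`; in particular `f` is Lipschitz continuous on `(1/3)U`. -/
theorem analytic_bounded_image_lipschitz
    {E F : Type*} [AddCommGroup E] [Module ℂ E] [Module ℝ E] [IsScalarTower ℝ ℂ E]
    [TopologicalSpace E] [IsTopologicalAddGroup E] [ContinuousSMul ℂ E]
    [AddCommGroup F] [Module ℂ F] [Module ℝ F] [IsScalarTower ℝ ℂ F]
    [TopologicalSpace F] [IsTopologicalAddGroup F] [ContinuousSMul ℂ F]
    (U : Set E) (hUo : IsOpen U) (hU0 : (0 : E) ∈ U) (hUconv : Convex ℝ U)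
    (hUbal : Balanced ℂ U)
    (f : E → F) (hf : IsCAnalyticOn f U)
    (p : Seminorm ℂ F) (hp : Continuous p)
    (M : ℝ) (hM : ∀ x ∈ U, p (f x) ≤ M) :
    ∀ v ∈ (3 : ℝ)⁻¹ • U, ∀ w ∈ (3 : ℝ)⁻¹ • U,
      p (f w - f v) ≤ M * gauge ((3 : ℝ)⁻¹ • U) (w - v) := by
  have hRsmul : ∀ (c : ℝ) (x : E), c • x = ((c : ℂ)) • x := by
    intro c x
    rw [← algebraMap_smul ℂ c x, Complex.coe_algebraMap]
  have hcsR : ContinuousSMul ℝ E := by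
    refine ⟨?_⟩
    have : (fun q : ℝ × E => q.1 • q.2) = fun q : ℝ × E => ((q.1 : ℂ)) • q.2 := by
      funext q; exact hRsmul _ _
    rw [this]
    exact (Complex.continuous_ofReal.comp continuous_fst).smul continuous_snd
  set s : Set E := (3 : ℝ)⁻¹ • U with hs
  have hso : IsOpen s := hUo.smul₀ (by norm_num)
  have hs0 : (0 : E) ∈ s := ⟨0, hU0, smul_zero _⟩
  have hsconv : Convex ℝ s := hUconv.smul _
  have hM0 : 0 ≤ M := le_trans (apply_nonneg p _) (hM 0 hU0)
  intro v hv w hw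
  -- auxiliary membership
  obtain ⟨a, ha, hav⟩ := id hv
  -- balancedness of s
  have hsbal : ∀ (z : ℂ), ‖z‖ ≤ 1 → ∀ x ∈ s, z • x ∈ s := by
    rintro z hz x ⟨b, hb, rfl⟩
    refine ⟨z • b, hUbal z hz (smul_mem_smul_set hb), ?_⟩
    rw [smul_comm]
  -- gauge s (w - v) < 2
  have hwv2 : w - v ∈ (2 : ℝ) • s := by
    have h2 : (2 : ℝ) • s = s + s := by
      have h11 := hsconv.add_smul (p := 1) (q := 1) zero_le_one zero_le_one
      norm_num at h11
      rw [h11]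
    rw [h2, sub_eq_add_neg]
    refine add_mem_add hw ?_
    have := hsbal (-1) (by norm_num) v hv
    rwa [neg_one_smul] at this
  have hglt2 : gauge s (w - v) < 2 := gauge_lt_of_mem_smul _ 2 two_pos hso hwv2
  -- the key estimate
  have key : ∀ t : ℝ, gauge s (w - v) < t → t < 2 → p (f w - f v) ≤ M * t := by
    intro t hgt ht2
    have ht0 : 0 < t := lt_of_le_of_lt (gauge_nonneg _) hgt
    set u : E := t⁻¹ • (w - v) with hu_def
    have hu : u ∈ s := by
      have : gauge s u < 1 := by
        rw [hu_def, gauge_smul_of_nonneg (inv_nonneg.2 ht0.le), smul_eq_mul]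
        have h2 : t⁻¹ * gauge s (w - v) < t⁻¹ * t :=
          mul_lt_mul_of_pos_left hgt (inv_pos.2 ht0)
        rwa [inv_mul_cancel₀ ht0.ne'] at h2
      have hset := gauge_lt_one_eq_self_of_isOpen hsconv hs0 hso
      rw [← hset]; exact this
    have hmem : ∀ z : ℂ, ‖z‖ < 2 → v + z • u ∈ U := by
      intro z hz
      obtain ⟨b, hb, hbu⟩ := hu
      have hc : (z / 2) • b ∈ U := by
        refine hUbal (z / 2) ?_ (smul_mem_smul_set hb)
        rw [norm_div]
        have h2 : ‖(2 : ℂ)‖ = 2 := by norm_num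
        rw [h2]
        linarith
      have key_eq : v + z • u = (3 : ℝ)⁻¹ • a + (2/3 : ℝ) • ((z / 2) • b) := by
        rw [← hav, ← hbu]
        rw [smul_comm z ((3:ℝ)⁻¹) b]
        have : z • b = (2 : ℝ) • ((z / 2) • b) := by
          rw [hRsmul, smul_smul]
          congr 1
          push_cast
          ring
        rw [this, smul_smul]
        norm_num
      rw [key_eq]
      exact hUconv ha hc (by norm_num) (by norm_num) (by norm_num)
    -- Hahn–Banach functional
    obtain ⟨ℓ, hℓ, hℓy⟩ := seminorm_hahn_banach p (f w - f v)
    have hℓcont : Continuous ℓ := by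
      refine continuous_of_continuousAt_zero ℓ ?_
      rw [ContinuousAt, map_zero]
      refine squeeze_zero_norm (fun x => hℓ x) ?_
      have := hp.tendsto 0
      rwa [map_zero] at this
    set ℓ' : F →L[ℂ] ℂ := ⟨ℓ, hℓcont⟩ with hℓ'
    set h : ℂ → ℂ := fun z => ℓ (f (v + z • u)) with hh
    have hdiff : DifferentiableOn ℂ h (Metric.ball (0 : ℂ) 2) := by
      intro z₀ hz₀
      have hz₀' : ‖z₀‖ < 2 := by simpa [Metric.mem_ball, dist_zero_right] using hz₀
      have hx₀ : v + z₀ • u ∈ U := hmem z₀ hz₀'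
      obtain ⟨P, V, hVo, hxV, hVU, hsum⟩ := hf.2 _ hx₀
      have hcont : Continuous fun z : ℂ => v + z • u :=
        continuous_const.add (continuous_id.smul continuous_const)
      have hopen : IsOpen {z : ℂ | v + z • u ∈ V} := hVo.preimage hcont
      obtain ⟨r, hr0, hrball⟩ := Metric.isOpen_iff.1 hopen z₀ hxV
      set c : ℕ → ℂ := fun k => ℓ (P k fun _ => u) with hc
      have hkey : ∀ z ∈ Metric.ball z₀ r, HasSum (fun k => (z - z₀) ^ k * c k) (h z) := by
        intro z hz
        have hyV : v + z • u ∈ V := hrball hz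
        have h1 := (hsum _ hyV).mapL ℓ'
        have h2 : ∀ k : ℕ, ℓ' (P k fun _ => (v + z • u) - (v + z₀ • u)) =
            (z - z₀) ^ k * c k := by
          intro k
          have he : (v + z • u) - (v + z₀ • u) = (z - z₀) • u := by
            rw [sub_smul]; abel
          rw [he]
          have := (P k).map_smul_univ (fun _ : Fin k => z - z₀) (fun _ => u)
          simp only [Finset.prod_const, Finset.card_univ, Fintype.card_fin] at this
          rw [this, map_smul]
          simp [hc, hℓ', smul_eq_mul]
        have h3 := h1; simp only [h2] at h3; exact h3
      set q : FormalMultilinearSeries ℂ ℂ ℂ :=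
        fun k => ContinuousMultilinearMap.mkPiRing ℂ (Fin k) (c k) with hq
      have hrad : ENNReal.ofReal (r / 2) ≤ q.radius := by
        have hmem2 : z₀ + ((r / 2 : ℝ) : ℂ) ∈ Metric.ball z₀ r := by
          simp only [Metric.mem_ball, dist_self_add_left]
          rw [Complex.norm_real, Real.norm_eq_abs, abs_of_pos (half_pos hr0)]
          linarith
        have hsum2 := (hkey _ hmem2).summable
        have htend := hsum2.tendsto_atTop_zero
        have htend2 : Filter.Tendsto (fun k : ℕ => ‖q k‖ * ((r / 2 : ℝ)) ^ k)
            Filter.atTop (nhds 0) := by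
          have := htend.norm
          rw [norm_zero] at this
          refine this.congr fun k => ?_
          rw [norm_mul, norm_pow]
          simp only [add_sub_cancel_left]
          rw [Complex.norm_real, Real.norm_eq_abs, abs_of_pos (half_pos hr0), hq,
            ContinuousMultilinearMap.norm_mkPiRing]
          ring
        have hle := q.le_radius_of_tendsto (r := (r / 2 : ℝ).toNNReal)
          (by
            convert htend2 using 2 with k
            rw [Real.coe_toNNReal _ (le_of_lt (half_pos hr0))])
        exact hle
      have hball : HasFPowerSeriesOnBall h q z₀ (ENNReal.ofReal (r / 2)) := by
        refine ⟨hrad, ENNReal.ofReal_pos.2 (half_pos hr0), ?_⟩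
        intro y hy
        have hy' : ‖y‖ < r / 2 := by
          rw [EMetric.mem_ball, edist_dist, dist_zero_right] at hy
          exact (ENNReal.ofReal_lt_ofReal_iff (half_pos hr0)).1 hy
        have hzball : z₀ + y ∈ Metric.ball z₀ r := by
          simp only [Metric.mem_ball, dist_self_add_left]
          linarith
        have := hkey _ hzball
        simp only [add_sub_cancel_left] at this
        refine this.congr_fun fun k => ?_
        rw [hq]
        simp only [ContinuousMultilinearMap.mkPiRing_apply, Finset.prod_const,
          Finset.card_univ, Fintype.card_fin, smul_eq_mul]
      exact hball.hasFPowerSeriesAt.differentiableAt.differentiableWithinAt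
    -- bound on h
    have hbnd : ∀ z ∈ Metric.ball (0 : ℂ) 2, ‖h z‖ ≤ M := by
      intro z hz
      have hz' : ‖z‖ < 2 := by simpa [Metric.mem_ball, dist_zero_right] using hz
      exact le_trans (hℓ _) (hM _ (hmem z hz'))
    -- Schwarz lemma with ε
    have hsch : ∀ ε : ℝ, 0 < ε → ‖h ((t : ℝ) : ℂ) - h 0‖ ≤ (2 * M + ε) / 2 * t := by
      intro ε hε
      have hmaps : MapsTo h (Metric.ball (0 : ℂ) 2) (Metric.ball (h 0) (2 * M + ε)) := by
        intro z hz
        rw [Metric.mem_ball, dist_eq_norm]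
        calc ‖h z - h 0‖ ≤ ‖h z‖ + ‖h 0‖ := norm_sub_le _ _
          _ ≤ M + M := add_le_add (hbnd z hz) (hbnd 0 (by simp [Metric.mem_ball]))
          _ < 2 * M + ε := by linarith
      have htball : ((t : ℝ) : ℂ) ∈ Metric.ball (0 : ℂ) 2 := by
        rw [Metric.mem_ball, dist_zero_right, Complex.norm_real, Real.norm_eq_abs,
          abs_of_pos ht0]
        exact ht2
      have := Complex.dist_le_div_mul_dist_of_mapsTo_ball hdiff (hmaps.mono_right Metric.ball_subset_closedBall) htball
      rw [dist_eq_norm, dist_zero_right, Complex.norm_real, Real.norm_eq_abs,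
        abs_of_pos ht0] at this
      exact this
    have hfinal : ‖h ((t : ℝ) : ℂ) - h 0‖ ≤ M * t := by
      refine le_of_forall_pos_le_add fun δ hδ => ?_
      have := hsch (2 * δ / t) (by positivity)
      calc ‖h ((t : ℝ) : ℂ) - h 0‖ ≤ (2 * M + 2 * δ / t) / 2 * t := this
        _ = M * t + δ := by field_simp
    -- identify h t and h 0
    have hht : h ((t : ℝ) : ℂ) = ℓ (f w) := by
      have heq : v + ((t : ℝ) : ℂ) • u = w := by
        rw [← hRsmul, hu_def, smul_smul, mul_inv_cancel₀ ht0.ne', one_smul]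
        abel
      simp only [hh]
      rw [heq]
    have hh0 : h 0 = ℓ (f v) := by rw [hh]; simp
    rw [hht, hh0, ← map_sub] at hfinal
    exact le_trans hℓy hfinal
  -- conclude
  refine le_of_forall_pos_le_add fun ε hε => ?_
  set g₀ := gauge s (w - v) with hg₀
  have hg₀0 : 0 ≤ g₀ := gauge_nonneg _
  set t : ℝ := min (g₀ + ε / (M + 1)) ((g₀ + 2) / 2) with htdef
  have ht1 : g₀ < t := by
    rw [htdef, lt_min_iff]
    constructor
    · have : 0 < ε / (M + 1) := by positivity
      linarith
    · linarith
  have ht2 : t < 2 := by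
    rw [htdef]
    have : (g₀ + 2) / 2 < 2 := by linarith
    exact lt_of_le_of_lt (min_le_right _ _) this
  have := key t ht1 ht2
  calc p (f w - f v) ≤ M * t := this
    _ ≤ M * (g₀ + ε / (M + 1)) :=
      mul_le_mul_of_nonneg_left (min_le_left _ _) hM0
    _ = M * g₀ + M * (ε / (M + 1)) := by ring
    _ ≤ M * g₀ + ε := by
      have h1 : M * (ε / (M + 1)) ≤ ε := by
        rw [mul_div_assoc']
        rw [div_le_iff₀ (by linarith)]
        nlinarith
      linarith
end

section
/- In the evaluation-map counterexample: if E is a non-normable complex locally convex space which is a locally convex direct limit E = lim_→ E_n of an increasing sequence of normed complex spaces E_n, and E′ denotes the dual space with the topology of bounded convergence, then the evaluation map f : E′ × E → ℂ, (λ, x) ↦ λ(x), is not continuous, although its restriction f|_{E′ × E_n} is continuous ℂ-bilinear (hence complex analytic) for each n. -/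
open Set Pointwise

section Aux

variable {EL : Type*} [AddCommGroup EL] [Module ℂ EL] [Module ℝ EL] [IsScalarTower ℝ ℂ EL]
    [TopologicalSpace EL] [IsTopologicalAddGroup EL] [ContinuousSMul ℂ EL]
    [LocallyConvexSpace ℝ EL]

lemma aux_smulcomm : SMulCommClass ℝ ℂ EL :=
  ⟨fun r c x => by
    rw [← smul_one_smul ℂ r x, ← smul_one_smul ℂ r (c • x), smul_smul, smul_smul, mul_comm]⟩

/-- closed absolutely convex neighbourhood basis -/
lemma aux_closed_absconvex_nhds {W : Set EL} (hW : W ∈ nhds 0) :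
    ∃ C ∈ nhds (0 : EL), IsClosed C ∧ Balanced ℂ C ∧ Convex ℝ C ∧ C ⊆ W := by
  haveI : SMulCommClass ℝ ℂ EL := aux_smulcomm
  haveI : ContinuousSMul ℝ EL := IsScalarTower.continuousSMul ℂ
  obtain ⟨W₂, hW₂, hW₂half⟩ := exists_nhds_zero_half hW
  have hbasis : ∃ C₀ : Set EL, (C₀ ∈ nhds 0 ∧ Balanced ℂ C₀ ∧ Convex ℝ C₀) ∧ C₀ ⊆ W₂ := by
    obtain ⟨s, ⟨hsn, hsc⟩, hsW⟩ := (LocallyConvexSpace.convex_basis_zero ℝ EL).mem_iff.1 hW₂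
    refine ⟨convexHull ℝ (balancedCore ℂ s), ⟨Filter.mem_of_superset
      (balancedCore_mem_nhds_zero hsn) (subset_convexHull ℝ _), ?_, convex_convexHull ℝ _⟩,
      (convexHull_min (balancedCore_subset s) hsc).trans hsW⟩
    have hs := balancedCore_balanced (𝕜 := ℂ) s
    suffices Convex ℝ { x | ∀ a : ℂ, ‖a‖ ≤ 1 → a • x ∈ convexHull ℝ (balancedCore ℂ s) } by
      rw [balanced_iff_smul_mem] at hs ⊢
      refine fun a ha x hx => convexHull_min ?_ this hx a ha
      exact fun y hy a ha => subset_convexHull ℝ _ (hs ha hy)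
    intro x hx y hy u v hu hv huv a ha
    rw [smul_add, ← smul_comm u, ← smul_comm v]
    exact convex_convexHull ℝ _ (hx a ha) (hy a ha) hu hv huv
  obtain ⟨C₀, ⟨hC₀n, hC₀b, hC₀c⟩, hC₀W₂⟩ := hbasis
  refine ⟨closure C₀, Filter.mem_of_superset hC₀n subset_closure, isClosed_closure,
    hC₀b.closure, hC₀c.closure, ?_⟩
  intro x hx
  obtain ⟨y, hy, hyx⟩ := mem_closure_iff_nhds_zero.1 hx C₀ hC₀n
  have : x = y + -(y - x) := by abel
  rw [this]
  exact hW₂half _ (hC₀W₂ hy) _ (hC₀W₂ (hC₀b.neg_mem_iff.2 hyx))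

end Aux

/-- The evaluation-map counterexample: if `E` is a non-normable complex locally convex
space (it has no bounded `0`-neighbourhood) which is the locally convex direct limit of
an increasing sequence of normed spaces `E n` (with injective continuous linear
inclusions `ι n` into `E`, and the direct limit topology expressed by `hfinest`), and
`E →L[ℂ] ℂ` carries the topology of (uniform convergence on) bounded sets, then the
evaluation map `(λ, x) ↦ λ x` is not continuous on `E' × E`, although for each `n` its
restriction `(λ, x) ↦ λ (ι n x)` to `E' × E n` is continuous (and `ℂ`-bilinear). -/
theorem evaluation_map_counterexample
    {En : ℕ → Type*} [∀ n, NormedAddCommGroup (En n)] [∀ n, NormedSpace ℂ (En n)]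
    {EL : Type*} [AddCommGroup EL] [Module ℂ EL] [Module ℝ EL] [IsScalarTower ℝ ℂ EL]
    [TopologicalSpace EL] [IsTopologicalAddGroup EL] [ContinuousSMul ℂ EL]
    [LocallyConvexSpace ℝ EL] [T2Space EL]
    (ι : ∀ n, En n →ₗ[ℂ] EL)
    (hιc : ∀ n, Continuous (ι n)) (hιinj : ∀ n, Function.Injective (ι n))
    (hstep : ∀ n, ∃ j : En n →ₗ[ℂ] En (n + 1), Continuous j ∧ ∀ x, ι (n + 1) (j x) = ι n x)
    (hunion : ∀ x : EL, ∃ n y, ι n y = x)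
    (hfinest : ∀ V : Set EL, Convex ℝ V → (∀ n, IsOpen (ι n ⁻¹' V)) → IsOpen V)
    (hnonnorm : ¬ ∃ V ∈ nhds (0 : EL), Bornology.IsVonNBounded ℂ V) :
    ¬ Continuous (fun q : (EL →L[ℂ] ℂ) × EL => q.1 q.2) ∧
      ∀ n, Continuous (fun q : (EL →L[ℂ] ℂ) × En n => q.1 (ι n q.2)) := by
  constructor
  · -- the evaluation map is not continuous
    intro hcont
    -- get a product neighbourhood on which the evaluation is bounded by 1
    have h0 : (fun q : (EL →L[ℂ] ℂ) × EL => q.1 q.2) (0, 0) = 0 := by simp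
    have hpre : (fun q : (EL →L[ℂ] ℂ) × EL => q.1 q.2) ⁻¹' Metric.closedBall 0 1 ∈
        nhds ((0 : EL →L[ℂ] ℂ), (0 : EL)) := by
      refine hcont.continuousAt.preimage_mem_nhds ?_
      simpa using Metric.closedBall_mem_nhds (0 : ℂ) one_pos
    rw [nhds_prod_eq, Filter.mem_prod_iff] at hpre
    obtain ⟨U, hU, V, hV, hUV⟩ := hpre
    have hUV' : ∀ f ∈ U, ∀ x ∈ V, ‖f x‖ ≤ 1 := by
      intro f hf x hx
      have := hUV (Set.mk_mem_prod hf hx)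
      simpa [Metric.mem_closedBall, dist_zero_right] using this
    -- basic neighbourhood in the strong dual
    obtain ⟨⟨S, B⟩, ⟨hSb, hB⟩, hSBU⟩ := (ContinuousLinearMap.hasBasis_nhds_zero
      (𝕜₁ := ℂ) (E := EL) (F := ℂ)).mem_iff.1 hU
    obtain ⟨ε, hε, hball⟩ := Metric.mem_nhds_iff.1 hB
    -- show that V is von Neumann bounded, contradicting hnonnorm
    refine hnonnorm ⟨V, hV, ?_⟩
    intro W hW
    obtain ⟨C, hCn, hCcl, hCbal, hCco, hCW⟩ := aux_closed_absconvex_nhds hW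
    -- S is absorbed by C
    obtain ⟨r, hr⟩ := absorbs_iff_norm.1 (hSb hCn)
    set c₀ : ℝ := max r 1 with hc₀def
    have hc₀1 : (1 : ℝ) ≤ c₀ := le_max_right _ _
    have hc₀pos : (0 : ℝ) < c₀ := lt_of_lt_of_le one_pos hc₀1
    have hSC : S ⊆ (c₀ : ℂ) • C := by
      refine hr (c₀ : ℂ) ?_
      rw [Complex.norm_real, Real.norm_eq_abs, abs_of_pos hc₀pos]
      exact le_max_left _ _
    set t : ℝ := 2 * c₀ / ε with htdef
    have htpos : (0 : ℝ) < t := by positivity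
    set A : Set EL := (t : ℂ) • C with hAdef
    have hA0 : (0 : EL) ∈ A := ⟨0, mem_of_mem_nhds hCn, smul_zero _⟩
    have hAbal : Balanced ℂ A := hCbal.smul _
    have key : ∀ (a : ℝ) (z : EL), (a : ℂ) • z = a • z := fun a z => by
      rw [← smul_one_smul ℂ a z, Complex.real_smul, mul_one]
    have hAreal : A = t • C := by
      ext z
      constructor
      · rintro ⟨w, hw, rfl⟩
        exact ⟨w, hw, (key t w).symm⟩
      · rintro ⟨w, hw, rfl⟩
        exact ⟨w, hw, key t w⟩
    have hAco : Convex ℝ A := by rw [hAreal]; exact hCco.smul t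
    have hAcl : IsClosed A := by
      haveI : ContinuousSMul ℝ EL := IsScalarTower.continuousSMul ℂ
      rw [hAreal]
      exact hCcl.smul_of_ne_zero (ne_of_gt htpos)
    -- every point of V lies in A (scaled C)
    have hVA : V ⊆ A := by
      intro x hx
      by_contra hxA
      obtain ⟨f, u, hfA, hfx⟩ := RCLike.geometric_hahn_banach_closed_point (𝕜 := ℂ)
        hAco hAcl hxA
      have hu : (0 : ℝ) < u := by
        have := hfA 0 hA0
        simpa using this
      -- on the balanced set A the full norm of f is bounded by u
      have hfnorm : ∀ z ∈ A, ‖f z‖ ≤ u := by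
        intro z hz
        rcases eq_or_ne (f z) 0 with h | h
        · rw [h, norm_zero]; exact hu.le
        · set c : ℂ := ‖f z‖ / f z with hcdef
          have hcn : ‖c‖ = 1 := by
            rw [hcdef, norm_div, Complex.norm_real, norm_norm,
              div_self (norm_ne_zero_iff.2 h)]
          have hcz : c • z ∈ A := hAbal c (le_of_eq hcn) (smul_mem_smul_set hz)
          have hfc : f (c • z) = (‖f z‖ : ℂ) := by
            rw [map_smul, smul_eq_mul, hcdef, div_mul_cancel₀ _ h]
          calc ‖f z‖ = RCLike.re ((‖f z‖ : ℂ) : ℂ) := by simp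
          _ = RCLike.re (f (c • z)) := by rw [hfc]
          _ ≤ u := (hfA (c • z) hcz).le
      -- rescale f to land in the basic dual neighbourhood
      set μ : EL →L[ℂ] ℂ := ((1 / u : ℝ) : ℂ) • f with hμdef
      have hμU : μ ∈ U := by
        refine hSBU ?_
        intro y hy
        obtain ⟨z, hz, rfl⟩ := hSC hy
        have hzA : (t : ℂ) • z ∈ A := smul_mem_smul_set hz
        have h1 : t * ‖f z‖ ≤ u := by
          have := hfnorm _ hzA
          rwa [map_smul, smul_eq_mul, norm_mul, Complex.norm_real, Real.norm_eq_abs,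
            abs_of_pos htpos] at this
        have h2 : ‖f z‖ ≤ u / t := (le_div_iff₀' htpos).2 h1
        apply hball
        rw [Metric.mem_ball, dist_zero_right]
        have hnormy : ‖μ ((c₀ : ℂ) • z)‖ = 1 / u * (c₀ * ‖f z‖) := by
          rw [hμdef, ContinuousLinearMap.smul_apply, map_smul, smul_eq_mul, smul_eq_mul,
            norm_mul, norm_mul, Complex.norm_real, Complex.norm_real, Real.norm_eq_abs,
            Real.norm_eq_abs, abs_of_pos (by positivity : (0:ℝ) < 1/u), abs_of_pos hc₀pos]
        rw [hnormy]
        have hle2 : 1 / u * (c₀ * ‖f z‖) ≤ 1 / u * (c₀ * (u / t)) := by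
          apply mul_le_mul_of_nonneg_left (mul_le_mul_of_nonneg_left h2 hc₀pos.le)
          positivity
        have heq : 1 / u * (c₀ * (u / t)) = ε / 2 := by
          rw [htdef]
          field_simp
        rw [heq] at hle2
        linarith
      -- but then ‖μ x‖ ≤ 1, contradicting re (f x) > u
      have hle := hUV' μ hμU x hx
      have hgt : 1 < ‖μ x‖ := by
        have h1 : u < ‖f x‖ := lt_of_lt_of_le hfx (RCLike.re_le_norm _)
        have hnormx : ‖μ x‖ = 1 / u * ‖f x‖ := by
          rw [hμdef, ContinuousLinearMap.smul_apply, smul_eq_mul, norm_mul, Complex.norm_real,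
            Real.norm_eq_abs, abs_of_pos (by positivity : (0:ℝ) < 1/u)]
        rw [hnormx]
        calc (1 : ℝ) = 1 / u * u := by field_simp
        _ < 1 / u * ‖f x‖ := mul_lt_mul_of_pos_left h1 (by positivity)
      exact absurd hle (not_le.2 hgt)
    -- conclude that V is absorbed by W
    rw [absorbs_iff_norm]
    refine ⟨t, fun c hc => ?_⟩
    have hcne : c ≠ 0 := by
      intro h
      rw [h, norm_zero] at hc
      exact absurd hc (not_le.2 htpos)
    intro x hx
    obtain ⟨z, hz, rfl⟩ := hVA hx
    have hkey : c • ((((t : ℂ)) / c) • z) = (t : ℂ) • z := by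
      rw [smul_smul, mul_comm, div_mul_cancel₀ _ hcne]
    have hmem : (((t : ℂ)) / c) • z ∈ C := by
      refine hCbal ((t : ℂ) / c) ?_ (smul_mem_smul_set hz)
      rw [norm_div, Complex.norm_real, Real.norm_eq_abs, abs_of_pos htpos, div_le_one]
      · exact hc
      · exact lt_of_lt_of_le htpos hc
    show (t : ℂ) • z ∈ c • W
    exact hkey ▸ smul_mem_smul_set (hCW hmem)
  · -- the restrictions are continuous
    intro n
    set ιC : En n →L[ℂ] EL := ⟨ι n, hιc n⟩ with hιCdef
    set P : (EL →L[ℂ] ℂ) →L[ℂ] (En n →L[ℂ] ℂ) := ContinuousLinearMap.precomp ℂ ιC with hP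
    have heval : Continuous fun p : (En n →L[ℂ] ℂ) × En n => p.1 p.2 :=
      isBoundedBilinearMap_apply.continuous
    have hc : Continuous fun q : (EL →L[ℂ] ℂ) × En n => (P q.1) q.2 :=
      heval.comp ((P.continuous.comp continuous_fst).prodMk continuous_snd)
    exact hc
end

section
/- Let X be a topological space, E and F normed spaces, U ⊆ X × E a subset, and f : U → F a bounded continuous function. For x ∈ X set U_x := {y ∈ E : (x,y) ∈ U}, and assume there exists L ≥ 0 such that for every x ∈ X, the map f(x,·) : U_x → F is Lipschitz continuous with constant L. Let BC(X,E) denote the space of bounded continuous functions X → E with the supremum norm, and D := {γ ∈ BC(X,E) : graph(γ) ⊆ U}. Then for each γ ∈ D, the function f_*(γ) : X → F, x ↦ f(x, γ(x)), belongs to BC(X,F), and the superposition map f_* : D → BC(X,F) is Lipschitz continuous with constant L: ‖f_*(γ₂) − f_*(γ₁)‖_∞ ≤ L·‖γ₂ − γ₁‖_∞ for all γ₁, γ₂ ∈ D. -/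
/-- Superposition operators between spaces of bounded continuous functions:
if `f : U → F` (with `U ⊆ X × E`) is bounded, continuous, and Lipschitz in the second
variable with a constant `L` uniform in `x ∈ X`, then `γ ↦ f_*(γ) = (x ↦ f (x, γ x))`
maps `D = {γ ∈ BC(X,E) : graph γ ⊆ U}` into `BC(X,F)` and is Lipschitz with constant `L`. -/
theorem superposition_lipschitz
    {X E F : Type*} [TopologicalSpace X] [NormedAddCommGroup E] [NormedAddCommGroup F]
    (U : Set (X × E)) (f : X × E → F)
    (hcont : ContinuousOn f U)
    (C : ℝ) (hbdd : ∀ z ∈ U, ‖f z‖ ≤ C)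
    (L : ℝ) (hL : 0 ≤ L)
    (hlip : ∀ (x : X) (y₁ y₂ : E), (x, y₁) ∈ U → (x, y₂) ∈ U →
      ‖f (x, y₁) - f (x, y₂)‖ ≤ L * ‖y₁ - y₂‖) :
    (∀ γ : BoundedContinuousFunction X E, (∀ x, (x, γ x) ∈ U) →
        ∃ g : BoundedContinuousFunction X F, ∀ x, g x = f (x, γ x)) ∧
    ∀ (γ₁ γ₂ : BoundedContinuousFunction X E) (g₁ g₂ : BoundedContinuousFunction X F),
      (∀ x, (x, γ₁ x) ∈ U) → (∀ x, (x, γ₂ x) ∈ U) →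
      (∀ x, g₁ x = f (x, γ₁ x)) → (∀ x, g₂ x = f (x, γ₂ x)) →
      dist g₁ g₂ ≤ L * dist γ₁ γ₂ := by
  constructor
  · intro γ hγ
    have hc : Continuous fun x => f (x, γ x) :=
      hcont.comp_continuous (continuous_id.prodMk γ.continuous) hγ
    refine ⟨⟨⟨fun x => f (x, γ x), hc⟩, ?_⟩, fun x => rfl⟩
    refine ⟨2 * C, fun x y => ?_⟩
    calc dist (f (x, γ x)) (f (y, γ y)) ≤ ‖f (x, γ x)‖ + ‖f (y, γ y)‖ := dist_le_norm_add_norm _ _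
    _ ≤ C + C := add_le_add (hbdd _ (hγ x)) (hbdd _ (hγ y))
    _ = 2 * C := by ring
  · intro γ₁ γ₂ g₁ g₂ h₁ h₂ hg₁ hg₂
    refine (BoundedContinuousFunction.dist_le
      (mul_nonneg hL dist_nonneg)).mpr fun x => ?_
    rw [hg₁ x, hg₂ x, dist_eq_norm]
    calc ‖f (x, γ₁ x) - f (x, γ₂ x)‖ ≤ L * ‖γ₁ x - γ₂ x‖ := hlip x _ _ (h₁ x) (h₂ x)
    _ ≤ L * dist γ₁ γ₂ := by
        rw [← dist_eq_norm]
        exact mul_le_mul_of_nonneg_left (BoundedContinuousFunction.dist_coe_le_dist x) hL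
end

section
/- Let 0 < δ < ε be real numbers, m ∈ ℕ, and for ρ > 0 let V_ρ := (−1−ρ/2, 1+ρ/2)^m + i(−ρ/2, ρ/2)^m ⊆ ℂ^m. Let Hol_b(V_ρ, ℂ^m)_ℝ denote the real Banach space of bounded holomorphic maps V_ρ → ℂ^m mapping V_ρ ∩ ℝ^m into ℝ^m, with the supremum norm. Then the restriction map ρ : Hol_b(V_ε, ℂ^m)_ℝ → Hol_b(V_δ, ℂ^m)_ℝ, θ ↦ θ|_{V_δ}, is a compact operator. -/
/-- `V_ρ = (−1−ρ/2, 1+ρ/2)^m + i(−ρ/2, ρ/2)^m ⊆ ℂ^m`, with `ℂ^m = Fin m → ℂ` and the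
maximum norm. -/
def Vset (m : ℕ) (ρ : ℝ) : Set (Fin m → ℂ) :=
  {z | ∀ k, |(z k).re| < 1 + ρ / 2 ∧ |(z k).im| < ρ / 2}

open Metric Set Filter Topology

/-- Closed version of `Vset`. -/
def Kset (m : ℕ) (ρ : ℝ) : Set (Fin m → ℂ) :=
  {z | ∀ k, |(z k).re| ≤ 1 + ρ / 2 ∧ |(z k).im| ≤ ρ / 2}

lemma Vset_subset_Kset (m : ℕ) (ρ : ℝ) : Vset m ρ ⊆ Kset m ρ :=
  fun _ hz k => ⟨(hz k).1.le, (hz k).2.le⟩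

lemma Kset_subset_Vset (m : ℕ) {a b : ℝ} (h : a < b) : Kset m a ⊆ Vset m b := by
  intro z hz k
  exact ⟨(hz k).1.trans_lt (by linarith), (hz k).2.trans_lt (by linarith)⟩

lemma isOpen_Vset (m : ℕ) (ρ : ℝ) : IsOpen (Vset m ρ) := by
  have : Vset m ρ =
      ⋂ k, ({z : Fin m → ℂ | |(z k).re| < 1 + ρ / 2} ∩ {z | |(z k).im| < ρ / 2}) := by
    ext z; simp [Vset, forall_and]
  rw [this]
  refine isOpen_iInter_of_finite fun k => IsOpen.inter ?_ ?_
  · exact isOpen_lt ((Complex.continuous_re.comp (continuous_apply k)).abs) continuous_const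
  · exact isOpen_lt ((Complex.continuous_im.comp (continuous_apply k)).abs) continuous_const

lemma isCompact_Kset (m : ℕ) {ρ : ℝ} (hρ : 0 ≤ ρ) : IsCompact (Kset m ρ) := by
  have hclosed : IsClosed (Kset m ρ) := by
    have : Kset m ρ =
        ⋂ k, ({z : Fin m → ℂ | |(z k).re| ≤ 1 + ρ / 2} ∩ {z | |(z k).im| ≤ ρ / 2}) := by
      ext z; simp [Kset, forall_and]
    rw [this]
    refine isClosed_iInter fun k => IsClosed.inter ?_ ?_
    · exact isClosed_le ((Complex.continuous_re.comp (continuous_apply k)).abs) continuous_const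
    · exact isClosed_le ((Complex.continuous_im.comp (continuous_apply k)).abs) continuous_const
  refine Metric.isCompact_of_isClosed_isBounded hclosed ?_
  refine (Metric.isBounded_closedBall (x := (0 : Fin m → ℂ)) (r := 1 + ρ)).subset ?_
  intro z hz
  rw [mem_closedBall, dist_zero_right]
  refine pi_norm_le_iff_of_nonneg (by linarith)|>.2 fun k => ?_
  calc ‖z k‖ ≤ |(z k).re| + |(z k).im| := Complex.norm_le_abs_re_add_abs_im _
    _ ≤ (1 + ρ / 2) + ρ / 2 := add_le_add (hz k).1 (hz k).2
    _ = 1 + ρ := by ring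

lemma ball_subset_Vset {m : ℕ} {a b r : ℝ} {x : Fin m → ℂ} (hx : x ∈ Kset m a)
    (hab : a + 2 * r ≤ b) : Metric.ball x r ⊆ Vset m b := by
  intro y hy k
  have hk : dist (y k) (x k) < r := (dist_le_pi_dist y x k).trans_lt (mem_ball.1 hy)
  have hre : |(y k).re - (x k).re| < r := by
    calc |(y k).re - (x k).re| = |((y k) - (x k)).re| := by simp [Complex.sub_re]
      _ ≤ ‖(y k) - (x k)‖ := Complex.abs_re_le_norm _
      _ < r := by rwa [Complex.dist_eq] at hk
  have him : |(y k).im - (x k).im| < r := by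
    calc |(y k).im - (x k).im| = |((y k) - (x k)).im| := by simp [Complex.sub_im]
      _ ≤ ‖(y k) - (x k)‖ := Complex.abs_im_le_norm _
      _ < r := by rwa [Complex.dist_eq] at hk
  constructor
  · have h1 := (hx k).1
    rw [abs_le] at h1
    rw [abs_lt] at hre ⊢
    constructor <;> linarith [h1.1, h1.2, hre.1, hre.2]
  · have h1 := (hx k).2
    rw [abs_le] at h1
    rw [abs_lt] at him ⊢
    constructor <;> linarith [h1.1, h1.2, him.1, him.2]

/-- Key estimate: a bounded holomorphic function on a ball satisfies a Lipschitz-type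
estimate from the center, via the Schwarz lemma along complex lines. -/
lemma schwarz_key {D E : Type*} [NormedAddCommGroup D] [NormedSpace ℂ D]
    [NormedAddCommGroup E] [NormedSpace ℂ E]
    {f : D → E} {x w : D} {r M : ℝ} (hM : 0 ≤ M)
    (hd : DifferentiableOn ℂ f (Metric.ball x r))
    (hb : ∀ y ∈ Metric.ball x r, ‖f y - f x‖ ≤ M)
    (hw : w ∈ Metric.ball x r) :
    ‖f w - f x‖ ≤ M / r * ‖w - x‖ := by
  have hr : 0 < r := nonempty_ball.1 ⟨w, hw⟩
  rcases eq_or_ne w x with rfl | hne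
  · simp [mul_nonneg (div_nonneg hM hr.le) (norm_nonneg _)]
  have hc : 0 < ‖w - x‖ := by rwa [norm_pos_iff, sub_ne_zero]
  set c := ‖w - x‖ with hcdef
  refine le_of_forall_pos_le_add fun η hη => ?_
  set M' := M + η * r / c with hM'def
  have hMM' : M < M' := by
    have : 0 < η * r / c := by positivity
    simp only [hM'def]; linarith
  set R := r / c with hRdef
  have hcr : c < r := by rwa [mem_ball, dist_eq_norm] at hw
  have hR1 : 1 < R := (one_lt_div hc).2 hcr
  set F : ℂ → E := fun t => f (x + t • (w - x)) with hFdef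
  have hline : Differentiable ℂ fun t : ℂ => x + t • (w - x) :=
    (differentiable_id.smul_const (w - x)).const_add x
  have hmapsD : Set.MapsTo (fun t : ℂ => x + t • (w - x)) (Metric.ball 0 R) (Metric.ball x r) := by
    intro t ht
    rw [mem_ball] at ht ⊢
    rw [dist_eq_norm] at ht ⊢
    rw [add_sub_cancel_left, norm_smul]
    have : ‖t‖ < R := by simpa using ht
    calc ‖t‖ * c < R * c := by gcongr
      _ = r := div_mul_cancel₀ r hc.ne'
  have hdF : DifferentiableOn ℂ F (Metric.ball 0 R) :=
    hd.comp hline.differentiableOn hmapsD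
  have hF0 : F 0 = f x := by simp [hFdef]
  have hF1 : F 1 = f w := by simp [hFdef]
  have hmaps : Set.MapsTo F (Metric.ball (0 : ℂ) R) (Metric.ball (F 0) M') := by
    intro t ht
    rw [mem_ball, dist_eq_norm, hF0]
    exact (hb _ (hmapsD ht)).trans_lt hMM'
  have h1 : (1 : ℂ) ∈ Metric.ball (0 : ℂ) R := by
    rw [mem_ball, dist_zero_right]; simpa using hR1
  have hkey := Complex.dist_le_div_mul_dist_of_mapsTo_ball hdF (hmaps.mono_right ball_subset_closedBall) h1
  rw [hF0, hF1, dist_eq_norm] at hkey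
  have hd10 : dist (1 : ℂ) 0 = 1 := by simp
  rw [hd10, mul_one] at hkey
  calc ‖f w - f x‖ ≤ M' / R := hkey
    _ = M / r * c + η := by
        rw [hM'def, hRdef]; field_simp

/-- Bound on the Fréchet derivative of a bounded holomorphic function on a ball. -/
lemma fderiv_key {D E : Type*} [NormedAddCommGroup D] [NormedSpace ℂ D]
    [NormedAddCommGroup E] [NormedSpace ℂ E]
    {f : D → E} {x : D} {r M : ℝ} (hM : 0 ≤ M) (hr : 0 < r)
    (hd : DifferentiableOn ℂ f (Metric.ball x r))
    (hb : ∀ y ∈ Metric.ball x r, ‖f y - f x‖ ≤ M) :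
    ‖fderiv ℂ f x‖ ≤ M / r := by
  have hx : DifferentiableAt ℂ f x :=
    hd.differentiableAt (isOpen_ball.mem_nhds (mem_ball_self hr))
  refine hx.hasFDerivAt.le_of_lip' (div_nonneg hM hr.le) ?_
  filter_upwards [isOpen_ball.mem_nhds (mem_ball_self hr)] with y hy
  exact schwarz_key hM hd hb hy

set_option maxHeartbeats 1000000 in
set_option synthInstance.maxHeartbeats 400000 in
/-- The restriction map `Hol_b(V_ε, ℂ^m)_ℝ → Hol_b(V_δ, ℂ^m)_ℝ` (bounded holomorphic
maps sending reals to reals) is a compact operator for `0 < δ < ε`; compactness is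
expressed by sequential relative compactness of the image of the unit ball: every
sequence bounded by `1` admits a subsequence converging uniformly on `V_δ` to an
element of `Hol_b(V_δ, ℂ^m)_ℝ`. -/
theorem holb_real_restriction_compact (m : ℕ) (δ ε : ℝ) (h0 : 0 < δ) (hδε : δ < ε)
    (θ : ℕ → (Fin m → ℂ) → (Fin m → ℂ))
    (hdiff : ∀ n, DifferentiableOn ℂ (θ n) (Vset m ε))
    (hbd : ∀ n, ∀ z ∈ Vset m ε, ‖θ n z‖ ≤ 1)
    (hreal : ∀ n, ∀ z ∈ Vset m ε, (∀ k, (z k).im = 0) → ∀ k, (θ n z k).im = 0) :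
    ∃ (φ : ℕ → ℕ) (g : (Fin m → ℂ) → (Fin m → ℂ)), StrictMono φ ∧
      DifferentiableOn ℂ g (Vset m δ) ∧
      (∀ z ∈ Vset m δ, ‖g z‖ ≤ 1) ∧
      (∀ z ∈ Vset m δ, (∀ k, (z k).im = 0) → ∀ k, (g z k).im = 0) ∧
      TendstoUniformlyOn (fun j => θ (φ j)) g Filter.atTop (Vset m δ) := by
  classical
  set δ' := (δ + ε) / 2 with hδ'def
  set r := (ε - δ) / 8 with hrdef
  have hrpos : 0 < r := by rw [hrdef]; linarith
  set K : Set (Fin m → ℂ) := Kset m δ' with hKdef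
  have hKcomp : IsCompact K := isCompact_Kset m (by rw [hδ'def]; linarith)
  have hKV : K ⊆ Vset m ε := Kset_subset_Vset m (by rw [hδ'def]; linarith)
  have hVδK : Vset m δ ⊆ K := by
    intro z hz
    refine Vset_subset_Kset m δ' fun k => ?_
    exact ⟨(hz k).1.trans_le (by rw [hδ'def]; linarith),
      (hz k).2.trans_le (by rw [hδ'def]; linarith)⟩
  have hVδε : Vset m δ ⊆ Vset m ε := hVδK.trans hKV
  have hballV : ∀ x ∈ K, Metric.ball x r ⊆ Vset m ε := fun x hx =>
    ball_subset_Vset hx (by rw [hδ'def, hrdef]; linarith)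
  have hballK : ∀ x ∈ Vset m δ, Metric.ball x r ⊆ K := fun x hx =>
    (ball_subset_Vset (Vset_subset_Kset m δ hx)
      (show δ + 2 * r ≤ δ' by rw [hδ'def, hrdef]; linarith)).trans (Vset_subset_Kset m δ')
  haveI : CompactSpace K := isCompact_iff_compactSpace.mp hKcomp
  have hcont : ∀ n, ContinuousOn (θ n) K := fun n => ((hdiff n).continuousOn).mono hKV
  set F : ℕ → BoundedContinuousFunction K (Fin m → ℂ) := fun n =>
    BoundedContinuousFunction.mkOfCompact ⟨K.restrict (θ n), (hcont n).restrict⟩ with hFdef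
  -- uniform Lipschitz estimate on K
  have hlip : ∀ n, ∀ x ∈ K, ∀ w ∈ K, ‖θ n w - θ n x‖ ≤ 2 / r * dist w x := by
    intro n x hx w hw
    have hbound : ∀ y ∈ Metric.ball x r, ‖θ n y - θ n x‖ ≤ 2 := by
      intro y hy
      have hyV : y ∈ Vset m ε := hballV x hx hy
      calc ‖θ n y - θ n x‖ ≤ ‖θ n y‖ + ‖θ n x‖ := norm_sub_le _ _
        _ ≤ 1 + 1 := add_le_add (hbd n y hyV) (hbd n x (hKV hx))
        _ = 2 := by norm_num
    rcases lt_or_ge (dist w x) r with h | h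
    · have := schwarz_key (M := 2) (by norm_num)
        ((hdiff n).mono (hballV x hx)) hbound (Metric.mem_ball.2 h)
      rwa [dist_eq_norm]
    · calc ‖θ n w - θ n x‖ ≤ 1 + 1 :=
            (norm_sub_le _ _).trans (add_le_add (hbd n w (hKV hw)) (hbd n x (hKV hx)))
        _ = 2 / r * r := by rw [div_mul_cancel₀ (2:ℝ) hrpos.ne']; norm_num
        _ ≤ 2 / r * dist w x := by gcongr
  set A : Set (BoundedContinuousFunction K (Fin m → ℂ)) := Set.range F with hAdef
  have hequi : Equicontinuous ((↑) : A → K → (Fin m → ℂ)) := by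
    apply Metric.equicontinuous_of_continuity_modulus (fun t => 2 / r * t)
      ((continuous_const.mul continuous_id).tendsto' 0 0 (by simp))
    rintro x y ⟨f, ⟨n, rfl⟩⟩
    show dist (F n x) (F n y) ≤ 2 / r * dist x y
    calc dist (F n x) (F n y) = ‖θ n ↑x - θ n ↑y‖ := by rw [dist_eq_norm]; rfl
      _ ≤ 2 / r * dist (↑x : Fin m → ℂ) ↑y := hlip n ↑y y.2 ↑x x.2
      _ = 2 / r * dist x y := by rw [Subtype.dist_eq]
  have hA : IsCompact (closure A) := by
    refine BoundedContinuousFunction.arzela_ascoli (Metric.closedBall (0 : Fin m → ℂ) 1)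
      (isCompact_closedBall _ _) A ?_ hequi
    rintro f x ⟨n, rfl⟩
    rw [Metric.mem_closedBall, dist_zero_right]
    exact hbd n x (hKV x.2)
  obtain ⟨G, hGmem, φ, hφmono, hconv⟩ :=
    hA.tendsto_subseq (x := F) (fun n => subset_closure ⟨n, rfl⟩)
  set g : (Fin m → ℂ) → (Fin m → ℂ) := fun z => if h : z ∈ K then G ⟨z, h⟩ else 0 with hgdef
  have hunifK : TendstoUniformlyOn (fun j => θ (φ j)) g atTop K := by
    rw [tendstoUniformlyOn_iff_tendstoUniformly_comp_coe]
    have h1 := BoundedContinuousFunction.tendsto_iff_tendstoUniformly.mp hconv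
    have hgG : (g ∘ ((↑) : K → (Fin m → ℂ))) = ⇑G := by
      funext x
      simp only [Function.comp_apply, hgdef, dif_pos x.2, Subtype.coe_eta]
    rw [hgG]
    exact h1
  have hunifδ : TendstoUniformlyOn (fun j => θ (φ j)) g atTop (Vset m δ) := hunifK.mono hVδK
  have hpt : ∀ x ∈ Vset m δ, Tendsto (fun j => θ (φ j) x) atTop (𝓝 (g x)) := fun x hx =>
    hunifδ.tendsto_at hx
  have hgbd : ∀ z ∈ Vset m δ, ‖g z‖ ≤ 1 := fun z hz =>
    le_of_tendsto (hpt z hz).norm (Eventually.of_forall fun j => hbd (φ j) z (hVδε hz))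
  have hgreal : ∀ z ∈ Vset m δ, (∀ k, (z k).im = 0) → ∀ k, (g z k).im = 0 := by
    intro z hz hzr k
    have h1 : Tendsto (fun j => (θ (φ j) z k).im) atTop (𝓝 ((g z k).im)) :=
      (Complex.continuous_im.tendsto _).comp (((continuous_apply k).tendsto _).comp (hpt z hz))
    have h2 : (fun j => (θ (φ j) z k).im) = fun _ => (0 : ℝ) :=
      funext fun j => hreal (φ j) z (hVδε hz) hzr k
    rw [h2] at h1
    exact (tendsto_nhds_unique h1 tendsto_const_nhds)
  have hdiffat : ∀ n, ∀ x ∈ Vset m ε, DifferentiableAt ℂ (θ n) x := fun n x hx =>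
    (hdiff n).differentiableAt ((isOpen_Vset m ε).mem_nhds hx)
  set Φ : ℕ → (Fin m → ℂ) → ((Fin m → ℂ) →L[ℂ] (Fin m → ℂ)) :=
    fun j x => fderiv ℂ (θ (φ j)) x with hΦdef
  have hCauchyF : UniformCauchySeqOn (fun j => θ (φ j)) atTop K := hunifK.uniformCauchySeqOn
  have hCauchyΦ : UniformCauchySeqOn Φ atTop (Vset m δ) := by
    rw [Metric.uniformCauchySeqOn_iff]
    intro ε' hε'
    obtain ⟨N, hN⟩ := Metric.uniformCauchySeqOn_iff.mp hCauchyF (ε' * r / 4) (by positivity)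
    refine ⟨N, fun i hi j hj x hx => ?_⟩
    have hxε : x ∈ Vset m ε := hVδε hx
    have hfd : fderiv ℂ (fun z => θ (φ i) z - θ (φ j) z) x = Φ i x - Φ j x :=
      fderiv_sub (hdiffat (φ i) x hxε) (hdiffat (φ j) x hxε)
    have hbound : ‖fderiv ℂ (fun z => θ (φ i) z - θ (φ j) z) x‖ ≤ ε' * r / 2 / r := by
      refine fderiv_key (by positivity) hrpos ?_ ?_
      · exact ((hdiff (φ i)).mono (hballV x (hVδK hx))).sub
          ((hdiff (φ j)).mono (hballV x (hVδK hx)))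
      · intro y hy
        have hyK : y ∈ K := hballK x hx hy
        have hxK : x ∈ K := hVδK hx
        have h1 := hN i hi j hj y hyK
        have h2 := hN i hi j hj x hxK
        rw [dist_eq_norm] at h1 h2
        calc ‖(θ (φ i) y - θ (φ j) y) - (θ (φ i) x - θ (φ j) x)‖
            ≤ ‖θ (φ i) y - θ (φ j) y‖ + ‖θ (φ i) x - θ (φ j) x‖ := norm_sub_le _ _
          _ ≤ ε' * r / 4 + ε' * r / 4 := add_le_add h1.le h2.le
          _ = ε' * r / 2 := by ring
    rw [hfd] at hbound
    rw [dist_eq_norm]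
    calc ‖Φ i x - Φ j x‖ ≤ ε' * r / 2 / r := hbound
      _ = ε' / 2 := by field_simp
      _ < ε' := by linarith
  set g' : (Fin m → ℂ) → ((Fin m → ℂ) →L[ℂ] (Fin m → ℂ)) :=
    fun x => limUnder atTop (fun j => Φ j x) with hg'def
  have hΦpt : ∀ x ∈ Vset m δ, Tendsto (fun j => Φ j x) atTop (𝓝 (g' x)) := fun x hx =>
    (hCauchyΦ.cauchySeq hx).tendsto_limUnder
  have hΦunif : TendstoUniformlyOn Φ g' atTop (Vset m δ) :=
    hCauchyΦ.tendstoUniformlyOn_of_tendsto hΦpt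
  have hgderiv : ∀ x ∈ Vset m δ, HasFDerivAt g (g' x) x := fun x hx =>
    hasFDerivAt_of_tendstoUniformlyOn (isOpen_Vset m δ) hΦunif
      (fun j y hy => (hdiffat (φ j) y (hVδε hy)).hasFDerivAt) hpt hx
  exact ⟨φ, g, hφmono,
    fun x hx => (hgderiv x hx).differentiableAt.differentiableWithinAt, hgbd, hgreal, hunifδ⟩
end
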